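/- The toric code ground state ψ_{C_K4} on the tetrahedron (a lattice of sphere topology with n_s = 4 vertices, vertex degree d = 3 and n = 6 qubits on the edges) satisfies E_G(ψ_{C_K4}) = n_s − 1 = 3, equivalently Λ_max(ψ_{C_K4})² = 2^{−3}. In particular the −1 topological correction to the geometric entanglement of spins is present for the sphere topology as well. -/

import Mathlib

open scoped BigOperators
open scoped Classical

noncomputable section

namespace GeomEnt

def qInner {ι : Type} [Fintype ι] (φ ψ : (ι → ZMod 2) → ℂ) : ℂ :=
  ∑ x : ι → ZMod 2, (starRingEnd ℂ) (φ x) * ψ x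

def IsProductState {ι : Type} [Fintype ι] (Φ : (ι → ZMod 2) → ℂ) : Prop :=
  ∃ φ : ι → ZMod 2 → ℂ,
    (∀ i, ‖φ i 0‖ ^ 2 + ‖φ i 1‖ ^ 2 = 1) ∧
    ∀ x, Φ x = ∏ i, φ i (x i)

def LambdaMax {ι : Type} [Fintype ι] (ψ : (ι → ZMod 2) → ℂ) : ℝ :=
  sSup { r : ℝ | ∃ Φ, IsProductState Φ ∧ r = ‖qInner Φ ψ‖ }

def EG {ι : Type} [Fintype ι] (ψ : (ι → ZMod 2) → ℂ) : ℝ :=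
  - Real.logb 2 (LambdaMax ψ ^ 2)

def codeState {ι : Type} [Fintype ι] (C : Set (ι → ZMod 2)) : (ι → ZMod 2) → ℂ :=
  fun x => if x ∈ C then (((Real.sqrt (Nat.card C))⁻¹ : ℝ) : ℂ) else 0

/-- The 6 edges of the tetrahedron (complete graph K₄ on `Fin 4`). -/
abbrev K4Edge := { e : Sym2 (Fin 4) // ¬ e.IsDiag }

/-- Cut space of the tetrahedron toric code. -/
def CK4 : Set (K4Edge → ZMod 2) :=
  { x | ∃ T : Fin 4 → ZMod 2,
      ∀ (u v : Fin 4) (h : ¬ (s(u, v) : Sym2 (Fin 4)).IsDiag),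
        x ⟨s(u, v), h⟩ = T u + T v }

/- ### Auxiliary real inequalities -/

lemma final_ineq (p q s1 s2 : ℝ) (hp0 : 0 ≤ p) (hp1 : p ≤ 1) (hq0 : 0 ≤ q) (hq1 : q ≤ 1)
    (hs10 : 0 ≤ s1) (hs11 : s1 ≤ 1/4) (hs20 : 0 ≤ s2) (hs21 : s2 ≤ 1/4)
    (h1 : s1 ≤ p*(1-p)) (h2 : s2 ≤ q*(1-q)) :
    p*q + (1-p)*(1-q) + 8*(s1*s2) ≤ 1 := by
  have ht0 : 0 ≤ s1*s2 := mul_nonneg hs10 hs20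
  have ht : s1*s2 ≤ 1/16 := by nlinarith
  have hL0 : 0 ≤ p*(1-q) + q*(1-p) := by nlinarith
  have hsq : (p*(1-q) + q*(1-p))^2 ≥ 4*(s1*s2) := by
    nlinarith [sq_nonneg (p*(1-q) - q*(1-p)), mul_le_mul h1 h2 (by nlinarith) (by nlinarith)]
  have h2' : 4*(s1*s2) ≥ (8*(s1*s2))^2 := by nlinarith
  nlinarith [sq_nonneg (p*(1-q) + q*(1-p) - 8*(s1*s2))]

lemma stepA (a b x y : ℝ) (hx : 0 ≤ x) (hy : 0 ≤ y) (ha : 0 ≤ a) (hb : 0 ≤ b)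
    (h : a^2 + b^2 = 1) (hbound : x^2 + y^2 ≤ 1) : a*x + b*y ≤ 1 := by
  nlinarith [sq_nonneg (a*y - b*x), sq_nonneg (a*x + b*y),
    mul_nonneg (mul_nonneg ha hx) (mul_nonneg hb hy)]

lemma stepB (a b A1 A2 B1 B2 : ℝ) (h : a^2 + b^2 = 1) :
    (a*A1 + b*A2)^2 + (a*B1 + b*B2)^2 ≤ A1^2 + A2^2 + B1^2 + B2^2 := by
  nlinarith [sq_nonneg (b*A1 - a*A2), sq_nonneg (b*B1 - a*B2)]

lemma pairfacts (a1 b1 a2 b2 : ℝ) (ha1 : 0 ≤ a1) (hb1 : 0 ≤ b1) (ha2 : 0 ≤ a2) (hb2 : 0 ≤ b2)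
    (h1 : a1^2 + b1^2 = 1) (h2 : a2^2 + b2^2 = 1) :
    0 ≤ (a1*a2)^2 + (b1*b2)^2 ∧ (a1*a2)^2 + (b1*b2)^2 ≤ 1 ∧
    0 ≤ (a1*b1)*(a2*b2) ∧ (a1*b1)*(a2*b2) ≤ 1/4 ∧
    (a1*b1)*(a2*b2) ≤ ((a1*a2)^2 + (b1*b2)^2) * (1 - ((a1*a2)^2 + (b1*b2)^2)) := by
  have hm1 : a1*b1 ≤ 1/2 := by nlinarith [sq_nonneg (a1-b1)]
  have hm2 : a2*b2 ≤ 1/2 := by nlinarith [sq_nonneg (a2-b2)]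
  have hm10 : 0 ≤ a1*b1 := mul_nonneg ha1 hb1
  have hm20 : 0 ≤ a2*b2 := mul_nonneg ha2 hb2
  have hcomp : 1 - ((a1*a2)^2 + (b1*b2)^2) = (b1*a2)^2 + (a1*b2)^2 := by
    linear_combination (-(a2^2) - b2^2) * h1 - h2
  refine ⟨by positivity, by nlinarith [sq_nonneg (b1*a2), sq_nonneg (a1*b2)], by positivity,
    by nlinarith, ?_⟩
  rw [hcomp]
  have i1 : ((a1*a2)^2 + (b1*b2)^2) * ((b1*a2)^2 + (a1*b2)^2) - (a1*b1)^2 =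
      (a2*b2)^2*(a1^2-b1^2)^2 + ((a1*b1)^2*((a2^2+b2^2)^2 - 1)) := by ring
  have i2 : ((a1*a2)^2 + (b1*b2)^2) * ((b1*a2)^2 + (a1*b2)^2) - (a2*b2)^2 =
      (a1*b1)^2*(a2^2-b2^2)^2 + ((a2*b2)^2*((a1^2+b1^2)^2 - 1)) := by ring
  rw [h2] at i1; rw [h1] at i2
  nlinarith [sq_nonneg (a2*b2*(a1^2-b1^2)), sq_nonneg (a1*b1*(a2^2-b2^2)),
    mul_nonneg hm10 hm20]

lemma key_ineq (a12 a13 a14 a23 a24 a34 b12 b13 b14 b23 b24 b34 : ℝ)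
    (ha12 : 0 ≤ a12) (ha13 : 0 ≤ a13) (ha14 : 0 ≤ a14) (ha23 : 0 ≤ a23) (ha24 : 0 ≤ a24) (ha34 : 0 ≤ a34)
    (hb12 : 0 ≤ b12) (hb13 : 0 ≤ b13) (hb14 : 0 ≤ b14) (hb23 : 0 ≤ b23) (hb24 : 0 ≤ b24) (hb34 : 0 ≤ b34)
    (h12 : a12^2 + b12^2 = 1) (h13 : a13^2 + b13^2 = 1) (h14 : a14^2 + b14^2 = 1)
    (h23 : a23^2 + b23^2 = 1) (h24 : a24^2 + b24^2 = 1) (h34 : a34^2 + b34^2 = 1) :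
    a12*a13*a14*a23*a24*a34 + b12*b13*b14*a23*a24*a34 + b12*a13*a14*b23*b24*a34 +
    a12*b13*b14*b23*b24*a34 + a12*b13*a14*b23*a24*b34 + b12*a13*b14*b23*a24*b34 +
    b12*b13*a14*a23*b24*b34 + a12*a13*b14*a23*b24*b34 ≤ 1 := by
  obtain ⟨hp0, hp1, hs10, hs11, hkey1⟩ := pairfacts a13 b13 a14 b14 ha13 hb13 ha14 hb14 h13 h14
  obtain ⟨hq0, hq1, hs20, hs21, hkey2⟩ := pairfacts a23 b23 a24 b24 ha23 hb23 ha24 hb24 h23 h24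
  have hfin := final_ineq _ _ _ _ hp0 hp1 hq0 hq1 hs10 hs11 hs20 hs21 hkey1 hkey2
  have hB := stepB a12 b12 ((a13*a14)*(a23*a24) + (b13*b14)*(b23*b24))
      ((b13*b14)*(a23*a24) + (a13*a14)*(b23*b24))
      ((b13*a14)*(b23*a24) + (a13*b14)*(a23*b24))
      ((a13*b14)*(b23*a24) + (b13*a14)*(a23*b24)) h12
  have c13 : (b13*a14)^2 + (a13*b14)^2 = 1 - ((a13*a14)^2 + (b13*b14)^2) := by
    linear_combination (a14^2 + b14^2) * h13 + h14
  have c23 : (b23*a24)^2 + (a23*b24)^2 = 1 - ((a23*a24)^2 + (b23*b24)^2) := by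
    linear_combination (a24^2 + b24^2) * h23 + h24
  have hSigma : ((a13*a14)*(a23*a24) + (b13*b14)*(b23*b24))^2 +
      ((b13*b14)*(a23*a24) + (a13*a14)*(b23*b24))^2 +
      ((b13*a14)*(b23*a24) + (a13*b14)*(a23*b24))^2 +
      ((a13*b14)*(b23*a24) + (b13*a14)*(a23*b24))^2 =
      ((a13*a14)^2 + (b13*b14)^2) * ((a23*a24)^2 + (b23*b24)^2) +
      (1 - ((a13*a14)^2 + (b13*b14)^2)) * (1 - ((a23*a24)^2 + (b23*b24)^2)) +
      8*(((a13*b13)*(a14*b14))*((a23*b23)*(a24*b24))) := by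
    calc ((a13*a14)*(a23*a24) + (b13*b14)*(b23*b24))^2 +
      ((b13*b14)*(a23*a24) + (a13*a14)*(b23*b24))^2 +
      ((b13*a14)*(b23*a24) + (a13*b14)*(a23*b24))^2 +
      ((a13*b14)*(b23*a24) + (b13*a14)*(a23*b24))^2
        = ((a13*a14)^2 + (b13*b14)^2) * ((a23*a24)^2 + (b23*b24)^2) +
          ((b13*a14)^2 + (a13*b14)^2) * ((b23*a24)^2 + (a23*b24)^2) +
          8*(((a13*b13)*(a14*b14))*((a23*b23)*(a24*b24))) := by ring
      _ = _ := by rw [c13, c23]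
  have hchain : (a12*((a13*a14)*(a23*a24) + (b13*b14)*(b23*b24)) +
        b12*((b13*b14)*(a23*a24) + (a13*a14)*(b23*b24)))^2 +
      (a12*((b13*a14)*(b23*a24) + (a13*b14)*(a23*b24)) +
        b12*((a13*b14)*(b23*a24) + (b13*a14)*(a23*b24)))^2 ≤ 1 := by
    refine le_trans (le_trans hB (le_of_eq ?_)) (le_of_eq hSigma |>.trans ?_)
    · ring
    · exact le_of_le_of_eq hfin rfl
  have hF : a12*a13*a14*a23*a24*a34 + b12*b13*b14*a23*a24*a34 + b12*a13*a14*b23*b24*a34 +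
      a12*b13*b14*b23*b24*a34 + a12*b13*a14*b23*a24*b34 + b12*a13*b14*b23*a24*b34 +
      b12*b13*a14*a23*b24*b34 + a12*a13*b14*a23*b24*b34 =
      a34*(a12*((a13*a14)*(a23*a24) + (b13*b14)*(b23*b24)) +
        b12*((b13*b14)*(a23*a24) + (a13*a14)*(b23*b24))) +
      b34*(a12*((b13*a14)*(b23*a24) + (a13*b14)*(a23*b24)) +
        b12*((a13*b14)*(b23*a24) + (b13*a14)*(a23*b24))) := by ring
  rw [hF]
  exact stepA a34 b34 _ _ (by positivity) (by positivity) ha34 hb34 h34 hchain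

/- ### Combinatorics of the tetrahedron cut space -/

def cw (T : Fin 4 → ZMod 2) : K4Edge → ZMod 2 :=
  fun e => Sym2.lift ⟨fun u v => T u + T v, fun u v => by ring⟩ e.1

def E12 : K4Edge := ⟨s((0:Fin 4),(1:Fin 4)), by decide⟩
def E13 : K4Edge := ⟨s((0:Fin 4),(2:Fin 4)), by decide⟩
def E14 : K4Edge := ⟨s((0:Fin 4),(3:Fin 4)), by decide⟩
def E23 : K4Edge := ⟨s((1:Fin 4),(2:Fin 4)), by decide⟩
def E24 : K4Edge := ⟨s((1:Fin 4),(3:Fin 4)), by decide⟩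
def E34 : K4Edge := ⟨s((2:Fin 4),(3:Fin 4)), by decide⟩

def Sfin : Finset (K4Edge → ZMod 2) := Finset.univ.image cw

lemma Sfin_eq : Sfin = {cw ![0,0,0,0], cw ![1,0,0,0], cw ![0,1,0,0], cw ![1,1,0,0], cw ![0,0,1,0], cw ![1,0,1,0], cw ![1,0,0,1], cw ![0,0,0,1]} := by decide

lemma univ_edges : (Finset.univ : Finset K4Edge) = {E12, E13, E14, E23, E24, E34} := by decide

lemma cv0E12 : cw ![0,0,0,0] E12 = 0 := by decide
lemma cv0E13 : cw ![0,0,0,0] E13 = 0 := by decide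
lemma cv0E14 : cw ![0,0,0,0] E14 = 0 := by decide
lemma cv0E23 : cw ![0,0,0,0] E23 = 0 := by decide
lemma cv0E24 : cw ![0,0,0,0] E24 = 0 := by decide
lemma cv0E34 : cw ![0,0,0,0] E34 = 0 := by decide
lemma cv1E12 : cw ![1,0,0,0] E12 = 1 := by decide
lemma cv1E13 : cw ![1,0,0,0] E13 = 1 := by decide
lemma cv1E14 : cw ![1,0,0,0] E14 = 1 := by decide
lemma cv1E23 : cw ![1,0,0,0] E23 = 0 := by decide
lemma cv1E24 : cw ![1,0,0,0] E24 = 0 := by decide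
lemma cv1E34 : cw ![1,0,0,0] E34 = 0 := by decide
lemma cv2E12 : cw ![0,1,0,0] E12 = 1 := by decide
lemma cv2E13 : cw ![0,1,0,0] E13 = 0 := by decide
lemma cv2E14 : cw ![0,1,0,0] E14 = 0 := by decide
lemma cv2E23 : cw ![0,1,0,0] E23 = 1 := by decide
lemma cv2E24 : cw ![0,1,0,0] E24 = 1 := by decide
lemma cv2E34 : cw ![0,1,0,0] E34 = 0 := by decide
lemma cv3E12 : cw ![1,1,0,0] E12 = 0 := by decide
lemma cv3E13 : cw ![1,1,0,0] E13 = 1 := by decide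
lemma cv3E14 : cw ![1,1,0,0] E14 = 1 := by decide
lemma cv3E23 : cw ![1,1,0,0] E23 = 1 := by decide
lemma cv3E24 : cw ![1,1,0,0] E24 = 1 := by decide
lemma cv3E34 : cw ![1,1,0,0] E34 = 0 := by decide
lemma cv4E12 : cw ![0,0,1,0] E12 = 0 := by decide
lemma cv4E13 : cw ![0,0,1,0] E13 = 1 := by decide
lemma cv4E14 : cw ![0,0,1,0] E14 = 0 := by decide
lemma cv4E23 : cw ![0,0,1,0] E23 = 1 := by decide
lemma cv4E24 : cw ![0,0,1,0] E24 = 0 := by decide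
lemma cv4E34 : cw ![0,0,1,0] E34 = 1 := by decide
lemma cv5E12 : cw ![1,0,1,0] E12 = 1 := by decide
lemma cv5E13 : cw ![1,0,1,0] E13 = 0 := by decide
lemma cv5E14 : cw ![1,0,1,0] E14 = 1 := by decide
lemma cv5E23 : cw ![1,0,1,0] E23 = 1 := by decide
lemma cv5E24 : cw ![1,0,1,0] E24 = 0 := by decide
lemma cv5E34 : cw ![1,0,1,0] E34 = 1 := by decide
lemma cv6E12 : cw ![1,0,0,1] E12 = 1 := by decide
lemma cv6E13 : cw ![1,0,0,1] E13 = 1 := by decide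
lemma cv6E14 : cw ![1,0,0,1] E14 = 0 := by decide
lemma cv6E23 : cw ![1,0,0,1] E23 = 0 := by decide
lemma cv6E24 : cw ![1,0,0,1] E24 = 1 := by decide
lemma cv6E34 : cw ![1,0,0,1] E34 = 1 := by decide
lemma cv7E12 : cw ![0,0,0,1] E12 = 0 := by decide
lemma cv7E13 : cw ![0,0,0,1] E13 = 0 := by decide
lemma cv7E14 : cw ![0,0,0,1] E14 = 1 := by decide
lemma cv7E23 : cw ![0,0,0,1] E23 = 0 := by decide
lemma cv7E24 : cw ![0,0,0,1] E24 = 1 := by decide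
lemma cv7E34 : cw ![0,0,0,1] E34 = 1 := by decide

lemma prod6 (g : K4Edge → ℝ) : ∏ e, g e = g E12 * g E13 * g E14 * g E23 * g E24 * g E34 := by
  rw [univ_edges]
  rw [Finset.prod_insert (by decide), Finset.prod_insert (by decide),
    Finset.prod_insert (by decide), Finset.prod_insert (by decide),
    Finset.prod_insert (by decide), Finset.prod_singleton]
  ring

lemma sum_prod (f : K4Edge → ZMod 2 → ℝ) :
    ∑ x ∈ Sfin, ∏ e, f e (x e) =
      f E12 0 * f E13 0 * f E14 0 * f E23 0 * f E24 0 * f E34 0 +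
      f E12 1 * f E13 1 * f E14 1 * f E23 0 * f E24 0 * f E34 0 +
      f E12 1 * f E13 0 * f E14 0 * f E23 1 * f E24 1 * f E34 0 +
      f E12 0 * f E13 1 * f E14 1 * f E23 1 * f E24 1 * f E34 0 +
      f E12 0 * f E13 1 * f E14 0 * f E23 1 * f E24 0 * f E34 1 +
      f E12 1 * f E13 0 * f E14 1 * f E23 1 * f E24 0 * f E34 1 +
      f E12 1 * f E13 1 * f E14 0 * f E23 0 * f E24 1 * f E34 1 +
      f E12 0 * f E13 0 * f E14 1 * f E23 0 * f E24 1 * f E34 1 := by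
  rw [Sfin_eq]
  rw [Finset.sum_insert (by decide), Finset.sum_insert (by decide),
    Finset.sum_insert (by decide), Finset.sum_insert (by decide),
    Finset.sum_insert (by decide), Finset.sum_insert (by decide),
    Finset.sum_insert (by decide), Finset.sum_singleton]
  simp only [prod6, cv0E12 ,cv0E13 ,cv0E14 ,cv0E23 ,cv0E24 ,cv0E34 ,cv1E12 ,cv1E13 ,cv1E14 ,cv1E23 ,cv1E24 ,cv1E34 ,cv2E12 ,cv2E13 ,cv2E14 ,cv2E23 ,cv2E24 ,cv2E34 ,cv3E12 ,cv3E13 ,cv3E14 ,cv3E23 ,cv3E24 ,cv3E34 ,cv4E12 ,cv4E13 ,cv4E14 ,cv4E23 ,cv4E24 ,cv4E34 ,cv5E12 ,cv5E13 ,cv5E14 ,cv5E23 ,cv5E24 ,cv5E34 ,cv6E12 ,cv6E13 ,cv6E14 ,cv6E23 ,cv6E24 ,cv6E34 ,cv7E12 ,cv7E13 ,cv7E14 ,cv7E23 ,cv7E24 ,cv7E34]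
  ring

lemma mem_CK4_iff (x : K4Edge → ZMod 2) : x ∈ CK4 ↔ ∃ T, x = cw T := by
  constructor
  · rintro ⟨T, hT⟩
    refine ⟨T, funext fun e => ?_⟩
    obtain ⟨e', he⟩ := e
    induction e' using Sym2.ind with
    | _ u v => exact hT u v he
  · rintro ⟨T, rfl⟩
    exact ⟨T, fun u v h => rfl⟩

lemma CK4_eq : CK4 = ↑Sfin := by
  ext x
  rw [mem_CK4_iff]
  simp only [Sfin, Finset.coe_image, Finset.coe_univ, Set.image_univ, Set.mem_range]
  exact ⟨fun ⟨T, h⟩ => ⟨T, h.symm⟩, fun ⟨T, h⟩ => ⟨T, h.symm⟩⟩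

lemma card_CK4 : Nat.card CK4 = 8 := by
  rw [CK4_eq, Nat.card_coe_set_eq, Set.ncard_coe_finset]
  decide

/- ### Generic lemmas about `qInner` and `codeState` -/

lemma abs_qInner_le_sum {ι : Type} [Fintype ι] (C : Set (ι → ZMod 2))
    (S : Finset (ι → ZMod 2)) (hC : C = ↑S) (Φ : (ι → ZMod 2) → ℂ) :
    ‖qInner Φ (codeState C)‖ ≤
      (∑ x ∈ S, ‖Φ x‖) * (Real.sqrt (Nat.card C))⁻¹ := by
  have hc : (0:ℝ) ≤ (Real.sqrt (Nat.card C))⁻¹ := by positivity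
  have hmem : ∀ x ∈ S, codeState C x = (((Real.sqrt (Nat.card C))⁻¹ : ℝ) : ℂ) := by
    intro x hx
    have : x ∈ C := by rw [hC]; exact hx
    simp only [codeState, if_pos this]
  have hnot : ∀ x ∈ Finset.univ, x ∉ S →
      (starRingEnd ℂ) (Φ x) * codeState C x = 0 := by
    intro x _ hx
    have : x ∉ C := by rw [hC]; exact hx
    simp only [codeState, if_neg this, mul_zero]
  have hq : qInner Φ (codeState C) =
      ∑ x ∈ S, (starRingEnd ℂ) (Φ x) * (((Real.sqrt (Nat.card C))⁻¹ : ℝ) : ℂ) := by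
    rw [qInner, ← Finset.sum_subset (Finset.subset_univ S) hnot]
    exact Finset.sum_congr rfl fun x hx => by rw [hmem x hx]
  rw [hq]
  calc ‖∑ x ∈ S, (starRingEnd ℂ) (Φ x) * (((Real.sqrt (Nat.card C))⁻¹ : ℝ) : ℂ)‖
      ≤ ∑ x ∈ S, ‖(starRingEnd ℂ) (Φ x) * (((Real.sqrt (Nat.card C))⁻¹ : ℝ) : ℂ)‖ :=
        norm_sum_le _ _
    _ = ∑ x ∈ S, ‖Φ x‖ * (Real.sqrt (Nat.card C))⁻¹ := by
        refine Finset.sum_congr rfl fun x _ => ?_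
        rw [norm_mul, Complex.norm_conj, Complex.norm_real, Real.norm_of_nonneg hc]
    _ = (∑ x ∈ S, ‖Φ x‖) * (Real.sqrt (Nat.card C))⁻¹ := by
        rw [Finset.sum_mul]

lemma qInner_delta {ι : Type} [Fintype ι] (C : Set (ι → ZMod 2))
    (h0 : (fun _ => (0:ZMod 2)) ∈ C) :
    qInner (fun x => ∏ i, if x i = 0 then (1:ℂ) else 0) (codeState C) =
      (((Real.sqrt (Nat.card C))⁻¹ : ℝ) : ℂ) := by
  rw [qInner, Finset.sum_eq_single (fun _ => (0 : ZMod 2))]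
  · simp only [codeState, if_pos h0]
    norm_num
  · intro x _ hx
    obtain ⟨i, hi⟩ := Function.ne_iff.mp hx
    have : (∏ j, if x j = 0 then (1:ℂ) else 0) = 0 :=
      Finset.prod_eq_zero (Finset.mem_univ i) (by simp [hi])
    rw [this, map_zero, zero_mul]
  · intro h
    exact absurd (Finset.mem_univ _) h

/- ### Putting it together -/

lemma overlap_bound (Φ : (K4Edge → ZMod 2) → ℂ) (hΦ : IsProductState Φ) :
    ‖qInner Φ (codeState CK4)‖ ≤ (Real.sqrt 8)⁻¹ := by
  obtain ⟨φ, hnorm, hprod⟩ := hΦ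
  have hb := abs_qInner_le_sum CK4 Sfin CK4_eq Φ
  rw [card_CK4] at hb
  have hsum : (∑ x ∈ Sfin, ‖Φ x‖) ≤ 1 := by
    have : ∀ x ∈ Sfin, ‖Φ x‖ = ∏ e, ‖φ e (x e)‖ := by
      intro x _
      rw [hprod x, norm_prod]
    rw [Finset.sum_congr rfl this, sum_prod (fun e z => ‖φ e z‖)]
    exact key_ineq _ _ _ _ _ _ _ _ _ _ _ _
      (norm_nonneg _) (norm_nonneg _) (norm_nonneg _)
      (norm_nonneg _) (norm_nonneg _) (norm_nonneg _)
      (norm_nonneg _) (norm_nonneg _) (norm_nonneg _)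
      (norm_nonneg _) (norm_nonneg _) (norm_nonneg _)
      (hnorm E12) (hnorm E13) (hnorm E14) (hnorm E23) (hnorm E24) (hnorm E34)
  have hc : (0:ℝ) ≤ (Real.sqrt (8:ℕ))⁻¹ := by positivity
  calc ‖qInner Φ (codeState CK4)‖
      ≤ (∑ x ∈ Sfin, ‖Φ x‖) * (Real.sqrt (8:ℕ))⁻¹ := hb
    _ ≤ 1 * (Real.sqrt (8:ℕ))⁻¹ := mul_le_mul_of_nonneg_right hsum hc
    _ = (Real.sqrt 8)⁻¹ := by norm_num

def Φ0 : (K4Edge → ZMod 2) → ℂ := fun x => ∏ e, if x e = 0 then (1:ℂ) else 0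

lemma Φ0_prod : IsProductState Φ0 :=
  ⟨fun _ z => if z = 0 then (1:ℂ) else 0, fun _ => by norm_num, fun _ => rfl⟩

lemma zero_mem_CK4 : (fun _ => (0:ZMod 2)) ∈ CK4 :=
  ⟨fun _ => 0, fun u v h => by simp⟩

lemma qInner_Φ0 : qInner Φ0 (codeState CK4) = (((Real.sqrt 8)⁻¹ : ℝ) : ℂ) := by
  have := qInner_delta CK4 zero_mem_CK4
  rw [card_CK4] at this
  rw [show ((8:ℕ):ℝ) = (8:ℝ) from by norm_num] at this
  exact this

/-- the toric code ground state on the tetrahedron (sphere topology,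
n_s = 4 vertices, 6 edge qubits) has Λ_max² = 2⁻³, i.e. E_G = n_s − 1 = 3. -/
theorem toric_code_tetrahedron_GE :
    LambdaMax (codeState CK4) ^ 2 = ((2 : ℝ) ^ 3)⁻¹ ∧
    EG (codeState CK4) = 3 := by
  have hmem : (Real.sqrt 8)⁻¹ ∈
      { r : ℝ | ∃ Φ, IsProductState Φ ∧ r = ‖qInner Φ (codeState CK4)‖ } := by
    refine ⟨Φ0, Φ0_prod, ?_⟩
    rw [qInner_Φ0, Complex.norm_real, Real.norm_of_nonneg (by positivity)]
  have hub : ∀ r ∈ { r : ℝ | ∃ Φ, IsProductState Φ ∧ r = ‖qInner Φ (codeState CK4)‖ },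
      r ≤ (Real.sqrt 8)⁻¹ := by
    rintro r ⟨Φ, hP, rfl⟩
    exact overlap_bound Φ hP
  have hL : LambdaMax (codeState CK4) = (Real.sqrt 8)⁻¹ :=
    le_antisymm (csSup_le ⟨_, hmem⟩ hub) (le_csSup ⟨_, hub⟩ hmem)
  have hsq : LambdaMax (codeState CK4) ^ 2 = ((2 : ℝ) ^ 3)⁻¹ := by
    rw [hL, inv_pow, Real.sq_sqrt (by norm_num : (0:ℝ) ≤ 8)]
    norm_num
  refine ⟨hsq, ?_⟩
  rw [EG, hsq]
  rw [Real.logb_inv, Real.logb_pow]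
  norm_num [Real.logb_self_eq_one]

end GeomEnt
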